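/- For the qubit dephasing noise N(ρ) = (ρ + σ_3 ρ σ_3)/2, every ex-ante/ex-post protocol {(I_ω, C_ω)} satisfies Σ_ω Tr_HS(C_ω ∘ N ∘ I_ω) ≤ 2, and hence the average fidelity satisfies F̄ ≤ 2/3; moreover both the do-nothing protocol and the discriminate-and-reprepare protocol in the σ_3 eigenbasis achieve F̄ = 2/3. -/

import Mathlib

open Matrix ComplexOrder

/-- `id_n ⊗ Φ`. -/
noncomputable def applyBlocks {d : ℕ} (n : ℕ)
    (Φ : Matrix (Fin d) (Fin d) ℂ →ₗ[ℂ] Matrix (Fin d) (Fin d) ℂ)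
    (M : Matrix (Fin n × Fin d) (Fin n × Fin d) ℂ) :
    Matrix (Fin n × Fin d) (Fin n × Fin d) ℂ :=
  Matrix.of fun p q => Φ (Matrix.of fun i j => M (p.1, i) (q.1, j)) p.2 q.2

/-- Complete positivity. -/
def IsCP {d : ℕ}
    (Φ : Matrix (Fin d) (Fin d) ℂ →ₗ[ℂ] Matrix (Fin d) (Fin d) ℂ) : Prop :=
  ∀ (n : ℕ) (M : Matrix (Fin n × Fin d) (Fin n × Fin d) ℂ),
    M.PosSemidef → (applyBlocks n Φ M).PosSemidef

/-- Trace preservation. -/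
def IsTP {d : ℕ}
    (Φ : Matrix (Fin d) (Fin d) ℂ →ₗ[ℂ] Matrix (Fin d) (Fin d) ℂ) : Prop :=
  ∀ X, (Φ X).trace = X.trace

/-- An ex-ante/ex-post protocol. -/
def IsProtocol {d m : ℕ}
    (I C : Fin m → (Matrix (Fin d) (Fin d) ℂ →ₗ[ℂ] Matrix (Fin d) (Fin d) ℂ)) : Prop :=
  (∀ ω, IsCP (I ω)) ∧ (∀ X, ∑ ω, ((I ω) X).trace = X.trace) ∧
    (∀ ω, IsCP (C ω) ∧ IsTP (C ω))

/-- Average fidelity `F̄ = (2 + Σ_ω Tr_HS (C_ω ∘ N ∘ I_ω))/6` for a qubit. -/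
noncomputable def avgFid
    (N : Matrix (Fin 2) (Fin 2) ℂ →ₗ[ℂ] Matrix (Fin 2) (Fin 2) ℂ) {m : ℕ}
    (I C : Fin m → (Matrix (Fin 2) (Fin 2) ℂ →ₗ[ℂ] Matrix (Fin 2) (Fin 2) ℂ)) : ℝ :=
  ((2 : ℝ) + ∑ ω, (LinearMap.trace ℂ (Matrix (Fin 2) (Fin 2) ℂ)
      ((C ω) ∘ₗ N ∘ₗ (I ω))).re) / 6

/-- `σ_3`. -/
noncomputable def sigma3 : Matrix (Fin 2) (Fin 2) ℂ := !![1, 0; 0, -1]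

/-- The qubit dephasing channel `N(ρ) = (ρ + σ_3 ρ σ_3)/2`. -/
noncomputable def dephasing : Matrix (Fin 2) (Fin 2) ℂ →ₗ[ℂ] Matrix (Fin 2) (Fin 2) ℂ :=
  (1 / 2 : ℂ) • (LinearMap.id +
    (LinearMap.mulLeft ℂ sigma3).comp (LinearMap.mulRight ℂ sigma3))

/-- The spectral projections of `σ_3`. -/
noncomputable def Pk : Fin 2 → Matrix (Fin 2) (Fin 2) ℂ :=
  ![!![1, 0; 0, 0], !![0, 0; 0, 1]]

/-- Discriminate-and-reprepare in the `σ_3` eigenbasis. -/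
noncomputable def drInstr (ω : Fin 2) :
    Matrix (Fin 2) (Fin 2) ℂ →ₗ[ℂ] Matrix (Fin 2) (Fin 2) ℂ :=
  (LinearMap.mulLeft ℂ (Pk ω)).comp (LinearMap.mulRight ℂ (Pk ω))

noncomputable def drCorr (ω : Fin 2) :
    Matrix (Fin 2) (Fin 2) ℂ →ₗ[ℂ] Matrix (Fin 2) (Fin 2) ℂ :=
  (Matrix.traceLinearMap (Fin 2) ℂ ℂ).smulRight (Pk ω)

/-! ### Auxiliary lemmas -/

lemma traceLM (Φ : Matrix (Fin 2) (Fin 2) ℂ →ₗ[ℂ] Matrix (Fin 2) (Fin 2) ℂ) :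
    LinearMap.trace ℂ (Matrix (Fin 2) (Fin 2) ℂ) Φ
      = ∑ p : Fin 2 × Fin 2, Φ (Matrix.single p.1 p.2 1) p.1 p.2 := by
  rw [LinearMap.trace_eq_matrix_trace ℂ (Matrix.stdBasis ℂ (Fin 2) (Fin 2))]
  rw [Matrix.trace]
  congr 1
  ext p
  rw [Matrix.diag_apply, LinearMap.toMatrix_apply, Matrix.stdBasis_eq_single]
  simp [Matrix.stdBasis]

lemma diag_re_nonneg {P : Matrix (Fin 2) (Fin 2) ℂ} (hP : P.PosSemidef) (i : Fin 2) :
    0 ≤ (P i i).re := by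
  have h := hP.dotProduct_mulVec_nonneg (Pi.single i 1)
  rw [Complex.le_def] at h
  simpa [dotProduct, mulVec, Pi.single_apply, Fin.sum_univ_two] using h.1

lemma diag_im_zero {P : Matrix (Fin 2) (Fin 2) ℂ} (hP : P.PosSemidef) (i : Fin 2) :
    (P i i).im = 0 := by
  have h := hP.1.apply i i
  have := congrArg Complex.im h
  simp [Complex.conj_im] at this
  linarith

lemma offdiag_sq_le {P : Matrix (Fin 2) (Fin 2) ℂ} (hP : P.PosSemidef) :
    Complex.normSq (P 0 1) ≤ (P 0 0).re * (P 1 1).re := by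
  set c := P 0 1 with hc
  have h10 : P 1 0 = starRingEnd ℂ c := by
    rw [hc]; exact (hP.1.apply 1 0).symm ▸ rfl
  have key : ∀ t : ℝ, 0 ≤ t ^ 2 * (Complex.normSq c * (P 0 0).re)
      - 2 * t * Complex.normSq c + (P 1 1).re := by
    intro t
    have h := hP.dotProduct_mulVec_nonneg ![(t : ℂ) * c, -1]
    rw [Complex.le_def] at h
    have h1 := h.1
    simp only [dotProduct, mulVec, Fin.sum_univ_two, Matrix.cons_val_zero,
      Matrix.cons_val_one, Matrix.head_cons, Pi.star_apply, star_mul', h10,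
      Complex.star_def] at h1
    have heq : ((starRingEnd ℂ) (↑t * c) * (P 0 0 * (↑t * c) + P 0 1 * -1) +
        (starRingEnd ℂ) (-1) * ((starRingEnd ℂ) c * (↑t * c) + P 1 1 * -1)).re
        = t ^ 2 * (Complex.normSq c * (P 0 0).re) - 2 * t * Complex.normSq c + (P 1 1).re := by
      rw [← hc]
      simp [Complex.add_re, Complex.mul_re, Complex.mul_im, Complex.conj_re, Complex.conj_im,
        Complex.normSq_apply, Complex.ofReal_re, Complex.ofReal_im]
      ring
    rw [heq] at h1
    simpa using h1
  rcases eq_or_lt_of_le (Complex.normSq_nonneg c) with hc0 | hc0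
  · rw [← hc0]
    exact mul_nonneg (diag_re_nonneg hP 0) (diag_re_nonneg hP 1)
  · rcases eq_or_lt_of_le (diag_re_nonneg hP 0) with hp0 | hp0
    · exfalso
      have h := key (((P 1 1).re + 1) / (2 * Complex.normSq c))
      rw [← hp0] at h
      have h2 : (0:ℝ) < 2 * Complex.normSq c := by linarith
      rw [div_pow] at h
      field_simp at h
      nlinarith
    · have h := key (1 / (P 0 0).re)
      have hne : (P 0 0).re ≠ 0 := ne_of_gt hp0
      field_simp at h
      nlinarith [mul_pos hp0 hp0]

lemma key_ineq {P Q : Matrix (Fin 2) (Fin 2) ℂ} (hP : P.PosSemidef) (hQ : Q.PosSemidef) :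
    (∑ i : Fin 2, ∑ j : Fin 2, P i j * Q i j).re ≤ P.trace.re * Q.trace.re := by
  have hP10 : P 1 0 = starRingEnd ℂ (P 0 1) := (hP.1.apply 1 0).symm ▸ rfl
  have hQ10 : Q 1 0 = starRingEnd ℂ (Q 0 1) := (hQ.1.apply 1 0).symm ▸ rfl
  have hre : (∑ i : Fin 2, ∑ j : Fin 2, P i j * Q i j).re
      = (P 0 0).re * (Q 0 0).re + (P 1 1).re * (Q 1 1).re + 2 * (P 0 1 * Q 0 1).re := by
    simp [Fin.sum_univ_two, Complex.add_re, Complex.mul_re, hP10, hQ10,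
      diag_im_zero hP 0, diag_im_zero hP 1, diag_im_zero hQ 0, diag_im_zero hQ 1,
      Complex.conj_re, Complex.conj_im]
    ring
  rw [hre, Matrix.trace_fin_two P, Matrix.trace_fin_two Q, Complex.add_re, Complex.add_re]
  have h1 : (P 0 1 * Q 0 1).re ≤ ‖P 0 1‖ * ‖Q 0 1‖ := by
    calc (P 0 1 * Q 0 1).re ≤ ‖P 0 1 * Q 0 1‖ := Complex.re_le_norm _
    _ = ‖P 0 1‖ * ‖Q 0 1‖ := norm_mul _ _
  have hp := offdiag_sq_le hP
  have hq := offdiag_sq_le hQ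
  rw [← Complex.sq_norm] at hp hq
  have p0 := diag_re_nonneg hP 0
  have p1 := diag_re_nonneg hP 1
  have q0 := diag_re_nonneg hQ 0
  have q1 := diag_re_nonneg hQ 1
  have rP := norm_nonneg (P 0 1)
  have rQ := norm_nonneg (Q 0 1)
  nlinarith [sq_nonneg ((P 0 0).re * (Q 1 1).re - (P 1 1).re * (Q 0 0).re),
    sq_nonneg (‖P 0 1‖ * ‖Q 0 1‖),
    mul_nonneg rP rQ, mul_nonneg p0 q1, mul_nonneg p1 q0,
    mul_le_mul hp hq (sq_nonneg _) (mul_nonneg p0 p1),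
    sq_nonneg ((P 0 0).re * (Q 1 1).re + (P 1 1).re * (Q 0 0).re
      - 2 * ‖P 0 1‖ * ‖Q 0 1‖)]

lemma cp_psd {Φ : Matrix (Fin 2) (Fin 2) ℂ →ₗ[ℂ] Matrix (Fin 2) (Fin 2) ℂ}
    (h : IsCP Φ) {X : Matrix (Fin 2) (Fin 2) ℂ} (hX : X.PosSemidef) :
    (Φ X).PosSemidef := by
  have hM : (X.submatrix (Prod.snd : Fin 1 × Fin 2 → Fin 2)
      (Prod.snd : Fin 1 × Fin 2 → Fin 2)).PosSemidef := hX.submatrix _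
  have h1 := h 1 _ hM
  have h2 := h1.submatrix (fun i : Fin 2 => ((0 : Fin 1), i))
  have heq : (applyBlocks 1 Φ (X.submatrix Prod.snd Prod.snd)).submatrix
      (fun i : Fin 2 => ((0 : Fin 1), i)) (fun i : Fin 2 => ((0 : Fin 1), i)) = Φ X := by
    ext i j
    rfl
  rwa [heq] at h2

lemma choi_psd {Φ : Matrix (Fin 2) (Fin 2) ℂ →ₗ[ℂ] Matrix (Fin 2) (Fin 2) ℂ}
    (h : IsCP Φ) :
    (Matrix.of fun p q : Fin 2 × Fin 2 =>
      Φ (Matrix.single p.1 q.1 1) p.2 q.2).PosSemidef := by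
  set B : Matrix (Fin 1) (Fin 2 × Fin 2) ℂ :=
    Matrix.of fun _ p => if p.1 = p.2 then 1 else 0 with hB
  have hM : (Bᴴ * B).PosSemidef := Matrix.posSemidef_conjTranspose_mul_self B
  have h1 := h 2 _ hM
  have heq : applyBlocks 2 Φ (Bᴴ * B) = Matrix.of fun p q : Fin 2 × Fin 2 =>
      Φ (Matrix.single p.1 q.1 1) p.2 q.2 := by
    ext p q
    simp only [applyBlocks, Matrix.of_apply]
    have heq2 : (Matrix.of fun i j => (Bᴴ * B) (p.1, i) (q.1, j))
        = Matrix.single p.1 q.1 (1:ℂ) := by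
      ext a b
      simp only [Matrix.mul_apply, Matrix.conjTranspose_apply, Matrix.of_apply, hB,
        Fin.sum_univ_one]
      simp only [Matrix.single, Matrix.of_apply]
      by_cases ha : p.1 = a <;> by_cases hb : q.1 = b <;> simp [ha, hb]
    rw [heq2]
  rwa [heq] at h1

lemma deph_apply (X : Matrix (Fin 2) (Fin 2) ℂ) :
    dephasing X = X 0 0 • Matrix.single 0 0 1 + X 1 1 • Matrix.single 1 1 1 := by
  ext i j
  fin_cases i <;> fin_cases j <;>
    simp [dephasing, sigma3, Matrix.mul_apply, Matrix.vecMul, dotProduct,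
      Fin.sum_univ_two, Matrix.single] <;>
    ring

lemma E_psd (i : Fin 2) : (Matrix.single i i (1:ℂ)).PosSemidef := by
  have : Matrix.single i i (1:ℂ) = Matrix.diagonal (Pi.single i 1) := by
    ext a b
    fin_cases i <;> fin_cases a <;> fin_cases b <;>
      simp [Matrix.single, Matrix.diagonal, Pi.single_apply]
  rw [this]
  refine Matrix.PosSemidef.diagonal ?_
  intro k
  by_cases h : k = i <;> simp [Pi.single_apply, h]

lemma E_trace (i : Fin 2) : (Matrix.single i i (1:ℂ)).trace = 1 := by
  fin_cases i <;> simp [Matrix.trace_fin_two, Matrix.single]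

/-- against dephasing noise every protocol satisfies
    `Σ_ω Tr_HS (C_ω ∘ N ∘ I_ω) ≤ 2`, hence `F̄ ≤ 2/3`; both the do-nothing
    protocol and discriminate-and-reprepare in the `σ_3` eigenbasis
    achieve `F̄ = 2/3`. -/
theorem stmt14 :
    (∀ (m : ℕ) (I C : Fin m → (Matrix (Fin 2) (Fin 2) ℂ →ₗ[ℂ] Matrix (Fin 2) (Fin 2) ℂ)),
      IsProtocol I C →
        (∑ ω, (LinearMap.trace ℂ (Matrix (Fin 2) (Fin 2) ℂ)
            ((C ω) ∘ₗ dephasing ∘ₗ (I ω))).re) ≤ 2 ∧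
        avgFid dephasing I C ≤ 2 / 3) ∧
    avgFid dephasing (fun _ : Fin 1 => LinearMap.id) (fun _ => LinearMap.id) = 2 / 3 ∧
    avgFid dephasing drInstr drCorr = 2 / 3 := by
  refine ⟨?_, ?_, ?_⟩
  · intro m I C hprot
    obtain ⟨hIcp, hItr, hC⟩ := hprot
    have bound : ∀ ω, (LinearMap.trace ℂ (Matrix (Fin 2) (Fin 2) ℂ)
        ((C ω) ∘ₗ dephasing ∘ₗ (I ω))).re ≤
        (((I ω) (Matrix.single 0 0 1)).trace + ((I ω) (Matrix.single 1 1 1)).trace).re := by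
      intro ω
      set A := C ω (Matrix.single 0 0 1) with hAdef
      set B := C ω (Matrix.single 1 1 1) with hBdef
      set a : Matrix (Fin 2) (Fin 2) ℂ :=
        Matrix.of fun i j => (I ω (Matrix.single i j 1)) 0 0 with hadef
      set b : Matrix (Fin 2) (Fin 2) ℂ :=
        Matrix.of fun i j => (I ω (Matrix.single i j 1)) 1 1 with hbdef
      have ha : a.PosSemidef := by
        have := (choi_psd (hIcp ω)).submatrix (fun i : Fin 2 => (i, (0 : Fin 2)))
        exact this
      have hb : b.PosSemidef := by
        have := (choi_psd (hIcp ω)).submatrix (fun i : Fin 2 => (i, (1 : Fin 2)))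
        exact this
      have hA : A.PosSemidef := cp_psd (hC ω).1 (E_psd 0)
      have hB : B.PosSemidef := cp_psd (hC ω).1 (E_psd 1)
      have hAt : A.trace = 1 := by rw [hAdef, (hC ω).2 _, E_trace]
      have hBt : B.trace = 1 := by rw [hBdef, (hC ω).2 _, E_trace]
      rw [traceLM]
      have hterm : ∀ p : Fin 2 × Fin 2,
          ((C ω ∘ₗ dephasing ∘ₗ I ω) (Matrix.single p.1 p.2 1)) p.1 p.2
          = a p.1 p.2 * A p.1 p.2 + b p.1 p.2 * B p.1 p.2 := by
        intro p
        simp only [LinearMap.comp_apply, deph_apply, map_add, _root_.map_smul,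
          Matrix.add_apply, Matrix.smul_apply, smul_eq_mul, hAdef, hBdef, hadef, hbdef,
          Matrix.of_apply]
      rw [Finset.sum_congr rfl fun p _ => hterm p, Finset.sum_add_distrib, Complex.add_re]
      have k1 : (∑ p : Fin 2 × Fin 2, a p.1 p.2 * A p.1 p.2).re ≤ a.trace.re * A.trace.re := by
        rw [Fintype.sum_prod_type]; exact key_ineq ha hA
      have k2 : (∑ p : Fin 2 × Fin 2, b p.1 p.2 * B p.1 p.2).re ≤ b.trace.re * B.trace.re := by
        rw [Fintype.sum_prod_type]; exact key_ineq hb hB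
      have hfin : a.trace.re * A.trace.re + b.trace.re * B.trace.re
          = (((I ω) (Matrix.single 0 0 1)).trace + ((I ω) (Matrix.single 1 1 1)).trace).re := by
        rw [hAt, hBt]
        simp [Matrix.trace_fin_two, Complex.add_re, hadef, hbdef]
        ring
      linarith
    have hsum : ∑ ω, (((I ω) (Matrix.single 0 0 1)).trace
        + ((I ω) (Matrix.single 1 1 1)).trace).re = 2 := by
      rw [← Complex.re_sum]
      rw [Finset.sum_add_distrib, hItr, hItr, E_trace, E_trace]
      norm_num
    have hle : (∑ ω, (LinearMap.trace ℂ (Matrix (Fin 2) (Fin 2) ℂ)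
        ((C ω) ∘ₗ dephasing ∘ₗ (I ω))).re) ≤ 2 := by
      calc _ ≤ ∑ ω, (((I ω) (Matrix.single 0 0 1)).trace
          + ((I ω) (Matrix.single 1 1 1)).trace).re :=
            Finset.sum_le_sum fun ω _ => bound ω
        _ = 2 := hsum
    refine ⟨hle, ?_⟩
    rw [avgFid]
    linarith
  · rw [avgFid]
    have hcomp : (LinearMap.id ∘ₗ dephasing ∘ₗ LinearMap.id :
        Matrix (Fin 2) (Fin 2) ℂ →ₗ[ℂ] Matrix (Fin 2) (Fin 2) ℂ) = dephasing := by
      rw [LinearMap.id_comp, LinearMap.comp_id]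
    have htr : (LinearMap.trace ℂ (Matrix (Fin 2) (Fin 2) ℂ) dephasing).re = 2 := by
      rw [traceLM]
      simp only [deph_apply]
      rw [Fintype.sum_prod_type]
      simp [Fin.sum_univ_two, Matrix.single]
      norm_num
    simp only [hcomp, Finset.sum_const, Finset.card_univ, Fintype.card_fin, one_smul, htr]
    norm_num
  · rw [avgFid]
    have h0 : ∀ ω : Fin 2, (LinearMap.trace ℂ (Matrix (Fin 2) (Fin 2) ℂ)
        ((drCorr ω) ∘ₗ dephasing ∘ₗ (drInstr ω))).re = 1 := by
      intro ω
      rw [traceLM]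
      fin_cases ω <;>
      · rw [Fintype.sum_prod_type]
        simp [drCorr, drInstr, deph_apply, Pk, Fin.sum_univ_two, Matrix.mul_apply,
          Matrix.vecMul, dotProduct, Matrix.of_apply,
          Matrix.trace_fin_two, Matrix.single, LinearMap.mulLeft_apply,
          LinearMap.mulRight_apply]
    simp only [Fin.sum_univ_two, h0]
    norm_num
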